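/- Define sequences in the commutative polynomial ring ℂ[h₃, h₄, h₅, ..., h̄₃][γ] by T₃ = 0 and T_{j+1} = Σ_{s=0}^{j-3} a_{j,s} · h_{j-s} · (δ_{0s}γ² - 2h_{3+s}h̄₃) for j ≥ 3, where a_{j,s} = ((j+2s+3)/(2(j-1)))·C(j-1,s+2). Define the derivation ∂ on this ring by ∂h_j = h_{j+1} (for j ≥ 3), ∂h̄₃ = 0, ∂γ = 0. Then for all j ≥ 3: T_{j+1} = ∂T_j + (j/2)·(γ² - 2h₃h̄₃)·h_j. -/

import Mathlib

/-- The coefficient `a_{j,s} = ((j+2s+3)/(2(j-1))) * C(j-1, s+2)` as a rational number. -/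
def acoef (j s : ℕ) : ℚ :=
  ((j : ℚ) + 2 * s + 3) / (2 * ((j : ℚ) - 1)) * (Nat.choose (j - 1) (s + 2))

lemma acoef_top (k : ℕ) (hk : 3 ≤ k) : acoef k (k - 2) = 0 := by
  have : (k - 1).choose (k - 2 + 2) = 0 := Nat.choose_eq_zero_of_lt (by omega)
  simp [acoef, this]

lemma acoef_zero (k : ℕ) (hk : 3 ≤ k) : acoef (k+1) 0 = acoef k 0 + ((k:ℚ)+1)/2 := by
  obtain ⟨m, rfl⟩ : ∃ m, k = m + 1 := ⟨k - 1, by omega⟩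
  have hm : 2 ≤ m := by omega
  have h2 := Nat.cast_choose_two (K := ℚ) (m+1)
  have h3 := Nat.cast_choose_two (K := ℚ) m
  have hk0 : ((m:ℚ)+1) ≠ 0 := by positivity
  have hm0 : (m:ℚ) ≠ 0 := by positivity
  unfold acoef
  simp only [Nat.add_sub_cancel, h2, h3]
  push_cast
  simp only [add_sub_cancel_right]
  field_simp
  ring

lemma acoef_pascal (k s : ℕ) (hk : 3 ≤ k) :
    acoef (k+1) (s+1) = acoef k (s+1) + acoef k s := by
  obtain ⟨m, rfl⟩ : ∃ m, k = m + 1 := ⟨k - 1, by omega⟩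
  have hm : 2 ≤ m := by omega
  have hk0 : ((m:ℚ)+1) ≠ 0 := by positivity
  have hm0 : (m:ℚ) ≠ 0 := by positivity
  have hpas : (Nat.choose (m+1) (s+3) : ℚ)
      = (Nat.choose m (s+2) : ℚ) + (Nat.choose m (s+3) : ℚ) := by
    rw [Nat.choose_succ_succ' m (s+2)]
    push_cast; ring
  have hrel : ((s:ℚ)+3) * (Nat.choose m (s+3) : ℚ)
      = ((m:ℚ) - 2 - s) * (Nat.choose m (s+2) : ℚ) := by
    rcases le_or_gt (s+2) m with hle | hlt
    · have h := Nat.choose_succ_right_eq m (s+2)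
      have hcast := congrArg (fun n : ℕ => (n : ℚ)) h
      push_cast at hcast
      have hsub : ((m - (s+2) : ℕ) : ℚ) = (m:ℚ) - 2 - s := by
        rw [Nat.cast_sub hle]; push_cast; ring
      rw [hsub] at hcast
      linarith [hcast]
    · have hc3 : Nat.choose m (s+3) = 0 := Nat.choose_eq_zero_of_lt (by omega)
      have hc2 : Nat.choose m (s+2) = 0 := Nat.choose_eq_zero_of_lt (by omega)
      rw [hc3, hc2]; push_cast; ring
  unfold acoef
  simp only [Nat.add_sub_cancel, show s+1+2 = s+3 from rfl, hpas]
  push_cast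
  simp only [add_sub_cancel_right]
  field_simp
  linear_combination (-2 : ℚ) * hrel

/-- In the polynomial ring `R = ℂ[γ, h̄₃, h₃, h₄, ...]` with the derivation `∂` satisfying
`∂h_j = h_{j+1}`, `∂h̄₃ = 0`, `∂γ = 0`, the sequence `T_j` defined by the explicit formula
`T_{j+1} = Σ_{s=0}^{j-3} a_{j,s} h_{j-s} (δ_{0s} γ² - 2 h_{3+s} h̄₃)` (with `T₃ = 0`)
satisfies the recursion `T_{j+1} = ∂T_j + (j/2)(γ² - 2h₃h̄₃) h_j`. -/
theorem T_recursion {R : Type*} [CommRing R] [Algebra ℂ R]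
    (D : Derivation ℂ R R) (γ hb : R) (h : ℕ → R) (T : ℕ → R)
    (hDh : ∀ j, 3 ≤ j → D (h j) = h (j + 1))
    (hDhb : D hb = 0) (hDγ : D γ = 0)
    (hT3 : T 3 = 0)
    (hTdef : ∀ j, 3 ≤ j → T (j + 1) =
      ∑ s ∈ Finset.range (j - 2),
        algebraMap ℂ R ((acoef j s : ℂ)) * h (j - s) *
          ((if s = 0 then γ ^ 2 else 0) - 2 * h (3 + s) * hb)) :
    ∀ j, 3 ≤ j → T (j + 1) = D (T j) +
      algebraMap ℂ R ((j : ℂ) / 2) * ((γ ^ 2 - 2 * h 3 * hb) * h j) := by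
  intro j hj
  rcases eq_or_lt_of_le hj with hj3 | hj4
  · -- base case j = 3
    subst hj3
    rw [hTdef 3 le_rfl, hT3, map_zero]
    have hc : ((acoef 3 0 : ℚ) : ℂ) = ((3:ℕ):ℂ)/2 := by norm_num [acoef]
    simp only [show (3:ℕ) - 2 = 1 from rfl, Finset.sum_range_one, hc]
    norm_num
    ring
  · -- inductive case j = k + 1, k ≥ 3
    obtain ⟨k, rfl⟩ : ∃ k, j = k + 1 := ⟨j - 1, by omega⟩
    have hk : 3 ≤ k := by omega
    rw [hTdef (k+1) (by omega), hTdef k hk, map_sum]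
    have hDterm : ∀ s ∈ Finset.range (k - 2),
        D (algebraMap ℂ R ((acoef k s : ℂ)) * h (k - s) *
            ((if s = 0 then γ ^ 2 else 0) - 2 * h (3 + s) * hb))
          = algebraMap ℂ R ((acoef k s : ℂ)) * h (k + 1 - s) *
              ((if s = 0 then γ ^ 2 else 0) - 2 * h (3 + s) * hb)
            - algebraMap ℂ R ((acoef k s : ℂ)) * (h (k - s) * (h (4 + s) * hb)) * 2 := by
      intro s hs
      rw [Finset.mem_range] at hs
      have hD1 : D (h (k - s)) = h (k + 1 - s) := by
        rw [hDh _ (by omega)]; congr 1; omega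
      have hD2 : D (h (3 + s)) = h (4 + s) := by
        rw [hDh _ (by omega)]; congr 1; omega
      have e1 : D (if s = 0 then γ ^ 2 else (0:R)) = 0 := by
        split_ifs
        · rw [sq, D.leibniz, hDγ]; simp
        · simp
      have e2 : D ((2:R) * h (3 + s) * hb) = 2 * (h (4 + s) * hb) := by
        have h22 : (2:R) * h (3 + s) * hb = h (3 + s) * hb + h (3 + s) * hb := by ring
        rw [h22, map_add, D.leibniz, hDhb, hD2]
        simp only [smul_eq_mul]; ring
      rw [D.leibniz, D.leibniz, Derivation.map_algebraMap, map_sub, e1, e2, hD1]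
      simp only [smul_eq_mul]; ring
    rw [Finset.sum_congr rfl hDterm, Finset.sum_sub_distrib]
    rw [show k + 1 - 2 = (k - 2) + 1 from by omega, Finset.sum_range_succ']
    have hshift : ∀ s ∈ Finset.range (k - 2),
        algebraMap ℂ R ((acoef (k+1) (s+1) : ℂ)) * h (k + 1 - (s+1)) *
            ((if s + 1 = 0 then γ ^ 2 else 0) - 2 * h (3 + (s+1)) * hb)
          = - (algebraMap ℂ R ((acoef k (s+1) : ℂ)) * (h (k - s) * (h (4 + s) * hb)) * 2)
            - algebraMap ℂ R ((acoef k s : ℂ)) * (h (k - s) * (h (4 + s) * hb)) * 2 := by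
      intro s hs
      rw [Finset.mem_range] at hs
      have e1 : k + 1 - (s+1) = k - s := by omega
      have e2 : 3 + (s+1) = 4 + s := by omega
      have e3 : ((acoef (k+1) (s+1) : ℚ) : ℂ)
          = ((acoef k (s+1) : ℚ):ℂ) + ((acoef k s : ℚ):ℂ) := by
        rw [acoef_pascal k s hk]; push_cast; ring
      rw [e1, e2, e3, map_add, if_neg (by omega : ¬ s + 1 = 0)]
      ring
    rw [Finset.sum_congr rfl hshift, Finset.sum_sub_distrib, Finset.sum_neg_distrib]
    -- Key re-indexing of the sum ∑ P
    have hP : ∑ s ∈ Finset.range (k - 2),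
          algebraMap ℂ R ((acoef k s : ℂ)) * h (k + 1 - s) *
            ((if s = 0 then γ ^ 2 else 0) - 2 * h (3 + s) * hb)
        = - ∑ s ∈ Finset.range (k - 2),
              algebraMap ℂ R ((acoef k (s+1) : ℂ)) * (h (k - s) * (h (4 + s) * hb)) * 2
          + algebraMap ℂ R ((acoef k 0 : ℂ)) * h (k + 1) * (γ ^ 2 - 2 * h 3 * hb) := by
      rw [show k - 2 = (k - 3) + 1 from by omega, Finset.sum_range_succ',
        Finset.sum_range_succ]
      have hz : algebraMap ℂ R ((acoef k ((k-3)+1) : ℂ)) = 0 := by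
        rw [show (k-3)+1 = k-2 from by omega, acoef_top k hk]
        simp
      rw [hz]
      have hcongr : ∀ s ∈ Finset.range (k - 3),
          algebraMap ℂ R ((acoef k (s+1) : ℂ)) * h (k + 1 - (s+1)) *
              ((if s + 1 = 0 then γ ^ 2 else 0) - 2 * h (3 + (s+1)) * hb)
            = - (algebraMap ℂ R ((acoef k (s+1) : ℂ)) * (h (k - s) * (h (4 + s) * hb)) * 2) := by
        intro s hs
        rw [Finset.mem_range] at hs
        rw [show k + 1 - (s+1) = k - s from by omega, show 3 + (s+1) = 4 + s from by omega,
          if_neg (by omega : ¬ s + 1 = 0)]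
        ring
      rw [Finset.sum_congr rfl hcongr, Finset.sum_neg_distrib]
      simp only [Nat.sub_zero, Nat.add_zero, if_pos rfl, if_true]
      ring
    rw [hP]
    have hB0 : ((acoef (k+1) 0 : ℚ) : ℂ) = ((acoef k 0 : ℚ) : ℂ) + ((k:ℂ)+1)/2 := by
      rw [acoef_zero k hk]; push_cast; ring
    rw [hB0, map_add]
    simp only [Nat.cast_add, Nat.cast_one, Nat.sub_zero, Nat.add_zero, if_pos rfl, if_true]
    ring
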